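/- For m, t ∈ ℝ and v ≥ 0, the supremum of E[(X − t)_+] over all integrable random variables X on an atomless probability space with E[X] = m and E[(X − m)²] ≤ v² equals (1/2)·( m − t + √(v² + (m − t)²) ), and also equals max over α ∈ [0,1] of { (1 − α)(m − t) + v·√(α(1 − α)) }. -/

import Mathlib

open MeasureTheory Set

/-- An atomless measure: every set of nonzero measure can be split nontrivially. -/
def Atomless {Ω : Type*} [MeasurableSpace Ω] (μ : Measure Ω) : Prop :=
  ∀ A : Set Ω, MeasurableSet A → μ A ≠ 0 →
    ∃ B ⊆ A, MeasurableSet B ∧ μ B ≠ 0 ∧ μ B ≠ μ A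

/-- The set of mean excess values `E[(X - t)_+]` achieved by integrable random variables `X`
with mean `m` and variance (second centralized moment) at most `v²` (the set `L²(m, v)`). -/
def meanExcessVarianceSet {Ω : Type*} [MeasurableSpace Ω] (μ : Measure Ω)
    (m v t : ℝ) : Set ℝ :=
  {y : ℝ | ∃ X : Ω → ℝ, Measurable X ∧ Integrable X μ ∧ (∫ ω, X ω ∂μ) = m ∧
    Integrable (fun ω => (X ω - m) ^ 2) μ ∧ (∫ ω, (X ω - m) ^ 2 ∂μ) ≤ v ^ 2 ∧
    y = ∫ ω, max (X ω - t) 0 ∂μ}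

open scoped ENNReal

section Aux
variable {Ω : Type*} [MeasurableSpace Ω] {μ : Measure Ω}

lemma atomless_half {Ω : Type*} [MeasurableSpace Ω] {μ : Measure Ω} [IsFiniteMeasure μ]
    (hμ : Atomless μ) {A : Set Ω} (hA : MeasurableSet A) (h0 : μ A ≠ 0) :
    ∃ B ⊆ A, MeasurableSet B ∧ μ B ≠ 0 ∧ μ B ≤ μ A / 2 := by
  obtain ⟨C, hCA, hCm, hC0, hCne⟩ := hμ A hA h0
  have hfin : μ A ≠ ⊤ := measure_ne_top μ A
  have hsum : μ C + μ (A \ C) = μ A := by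
    rw [measure_add_diff hCm.nullMeasurableSet A, union_eq_self_of_subset_left hCA]
  rcases le_or_gt (μ C) (μ A / 2) with h | h
  · exact ⟨C, hCA, hCm, hC0, h⟩
  · refine ⟨A \ C, diff_subset, hA.diff hCm, ?_, ?_⟩
    · intro hz
      rw [hz, add_zero] at hsum
      exact hCne hsum
    · by_contra hgt
      push_neg at hgt
      have : μ A < μ C + μ (A \ C) := by
        calc μ A = μ A / 2 + μ A / 2 := (ENNReal.add_halves _).symm
          _ < μ C + μ (A \ C) := ENNReal.add_lt_add h hgt
      rw [hsum] at this
      exact lt_irrefl _ this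

lemma atomless_small {Ω : Type*} [MeasurableSpace Ω] {μ : Measure Ω} [IsFiniteMeasure μ]
    (hμ : Atomless μ) {A : Set Ω} (hA : MeasurableSet A) (h0 : μ A ≠ 0)
    {ε : ℝ≥0∞} (hε : ε ≠ 0) :
    ∃ B ⊆ A, MeasurableSet B ∧ μ B ≠ 0 ∧ μ B ≤ ε := by
  have key : ∀ n : ℕ, ∃ B ⊆ A, MeasurableSet B ∧ μ B ≠ 0 ∧ μ B ≤ μ A / 2 ^ n := by
    intro n
    induction n with
    | zero => exact ⟨A, subset_rfl, hA, h0, by simp⟩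
    | succ n ih =>
      obtain ⟨B, hBA, hBm, hB0, hBle⟩ := ih
      obtain ⟨C, hCB, hCm, hC0, hCle⟩ := atomless_half hμ hBm hB0
      refine ⟨C, hCB.trans hBA, hCm, hC0, ?_⟩
      calc μ C ≤ μ B / 2 := hCle
        _ ≤ μ A / 2 ^ n / 2 := ENNReal.div_le_div_right hBle 2
        _ = μ A / 2 ^ (n + 1) := by
            rw [div_eq_mul_inv, div_eq_mul_inv, div_eq_mul_inv, mul_assoc,
              ← ENNReal.mul_inv (by simp) (by simp), ← pow_succ]
  have hfin : μ A ≠ ⊤ := measure_ne_top μ A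
  have : ∃ n : ℕ, μ A / 2 ^ n ≤ ε := by
    obtain ⟨n, hn⟩ := ENNReal.exists_inv_two_pow_lt
      (ENNReal.div_ne_zero.mpr ⟨hε, by simp [ENNReal.add_ne_top, hfin]⟩ :
        ε / (μ A + 1) ≠ 0)
    refine ⟨n, ?_⟩
    have h1 : μ A / 2 ^ n = μ A * 2⁻¹ ^ n := by
      rw [div_eq_mul_inv, ENNReal.inv_pow]
    rw [h1]
    calc μ A * 2⁻¹ ^ n ≤ (μ A + 1) * (ε / (μ A + 1)) := by
          exact mul_le_mul' (le_add_right le_rfl) hn.le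
      _ = ε := ENNReal.mul_div_cancel' (by simp) (by simp [ENNReal.add_ne_top, hfin])
  obtain ⟨n, hn⟩ := this
  obtain ⟨B, h1, h2, h3, h4⟩ := key n
  exact ⟨B, h1, h2, h3, h4.trans hn⟩

lemma sierpinski [IsProbabilityMeasure μ] (hμ : Atomless μ)
    {β : ℝ≥0∞} (hβ : β ≤ 1) : ∃ A : Set Ω, MeasurableSet A ∧ μ A = β := by
  classical
  -- greedy step
  have step : ∀ C : Set Ω, MeasurableSet C → μ C ≤ β →
      ∃ C' : Set Ω, MeasurableSet C' ∧ μ C' ≤ β ∧ C ⊆ C' ∧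
        ∀ E : Set Ω, MeasurableSet E → E ⊆ Cᶜ → μ C + μ E ≤ β → μ C + μ E / 2 ≤ μ C' := by
    intro C hCm hCβ
    set S : Set ℝ≥0∞ := {x | ∃ D : Set Ω, MeasurableSet D ∧ D ⊆ Cᶜ ∧ μ C + μ D ≤ β ∧ x = μ D}
    set T := sSup S with hT
    by_cases hT0 : T = 0
    · refine ⟨C, hCm, hCβ, subset_rfl, ?_⟩
      intro E hEm hEC hEβ
      have : μ E ≤ T := le_sSup ⟨E, hEm, hEC, hEβ, rfl⟩
      rw [hT0] at this
      simp [le_zero_iff.mp this]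
    · have hT1 : T ≤ 1 := by
        apply sSup_le
        rintro x ⟨D, _, _, hDβ, rfl⟩
        exact le_trans (le_trans le_add_self hDβ) hβ
      have : T / 2 < T := ENNReal.half_lt_self hT0 (lt_of_le_of_lt hT1 ENNReal.one_lt_top).ne
      obtain ⟨x, hxS, hx⟩ := lt_sSup_iff.mp this
      obtain ⟨D, hDm, hDC, hDβ, rfl⟩ := hxS
      refine ⟨C ∪ D, hCm.union hDm, ?_, subset_union_left, ?_⟩
      · rwa [measure_union (disjoint_compl_right.mono_right hDC) hDm]
      · intro E hEm hEC hEβ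
        have hE : μ E ≤ T := le_sSup ⟨E, hEm, hEC, hEβ, rfl⟩
        rw [measure_union (disjoint_compl_right.mono_right hDC) hDm]
        exact add_le_add le_rfl (le_trans (ENNReal.div_le_div_right hE 2) hx.le)
  -- the sequence
  let g : ℕ → {C : Set Ω // MeasurableSet C ∧ μ C ≤ β} := fun n =>
    Nat.rec ⟨∅, MeasurableSet.empty, by simp⟩
      (fun _ p => ⟨(step p.1 p.2.1 p.2.2).choose, (step p.1 p.2.1 p.2.2).choose_spec.1,
        (step p.1 p.2.1 p.2.2).choose_spec.2.1⟩) n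
  have hgsub : ∀ n, (g n).1 ⊆ (g (n+1)).1 := fun n =>
    (step (g n).1 (g n).2.1 (g n).2.2).choose_spec.2.2.1
  have hgstep : ∀ n, ∀ E : Set Ω, MeasurableSet E → E ⊆ ((g n).1)ᶜ →
      μ (g n).1 + μ E ≤ β → μ (g n).1 + μ E / 2 ≤ μ (g (n+1)).1 := fun n =>
    (step (g n).1 (g n).2.1 (g n).2.2).choose_spec.2.2.2
  have hmono : Monotone (fun n => (g n).1) := monotone_nat_of_le_succ hgsub
  set A : Set Ω := ⋃ n, (g n).1 with hA
  have hAm : MeasurableSet A := MeasurableSet.iUnion fun n => (g n).2.1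
  have hμA : μ A = ⨆ n, μ (g n).1 := hmono.measure_iUnion
  have hAβ : μ A ≤ β := by
    rw [hμA]; exact iSup_le fun n => (g n).2.2
  refine ⟨A, hAm, ?_⟩
  by_contra hne
  have hlt : μ A < β := lt_of_le_of_ne hAβ hne
  have hcompl : μ Aᶜ ≠ 0 := by
    intro h
    have h1 : (1 : ℝ≥0∞) ≤ μ A + μ Aᶜ := by
      have := measure_union_le A Aᶜ (μ := μ)
      rwa [union_compl_self, measure_univ] at this
    rw [h, add_zero] at h1
    exact absurd (lt_of_le_of_lt h1 (lt_of_lt_of_le hlt hβ)) (lt_irrefl _)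
  obtain ⟨D, hDA, hDm, hD0, hDle⟩ := atomless_small (μ := μ) hμ hAm.compl hcompl
    (ε := β - μ A) (by simpa [tsub_eq_zero_iff_le] using not_le.mpr hlt)
  have hDcand : ∀ n, μ (g n).1 + μ D ≤ β := by
    intro n
    have h1 : μ (g n).1 ≤ μ A := hμA ▸ le_iSup (fun n => μ (g n).1) n
    calc μ (g n).1 + μ D ≤ μ A + (β - μ A) := add_le_add h1 hDle
      _ = β := add_tsub_cancel_of_le hlt.le
  have hgrow : ∀ n, μ (g n).1 + μ D / 2 ≤ μ (g (n+1)).1 := by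
    intro n
    exact hgstep n D hDm (fun x hx => (compl_subset_compl.mpr (subset_iUnion (fun k => (g k).1) n)) (hDA hx)) (hDcand n)
  have hlin : ∀ n : ℕ, (n : ℝ≥0∞) * (μ D / 2) ≤ μ (g n).1 := by
    intro n
    induction n with
    | zero => simp
    | succ n ih =>
      push_cast [add_mul, one_mul]
      calc (n : ℝ≥0∞) * (μ D / 2) + μ D / 2 ≤ μ (g n).1 + μ D / 2 := add_le_add ih le_rfl
        _ ≤ μ (g (n+1)).1 := hgrow n
  have hd2 : μ D / 2 ≠ 0 := by
    simp [ENNReal.div_ne_zero, hD0]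
  have hdfin : μ D / 2 ≠ ⊤ := by
    exact (ENNReal.div_lt_top (measure_ne_top μ D) (by norm_num)).ne
  obtain ⟨n, hn⟩ := ENNReal.exists_nat_gt
    (show (1 : ℝ≥0∞) / (μ D / 2) ≠ ⊤ from (ENNReal.div_lt_top (by norm_num) hd2).ne)
  have : (1 : ℝ≥0∞) < (n : ℝ≥0∞) * (μ D / 2) := by
    rw [ENNReal.div_lt_iff (Or.inl hd2) (Or.inl hdfin)] at hn
    exact hn
  have hle1 : μ (g n).1 ≤ 1 := prob_le_one
  exact absurd (lt_of_lt_of_le (lt_of_lt_of_le this (hlin n)) hle1) (by norm_num)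

lemma mean_excess_le {Ω : Type*} [MeasurableSpace Ω] {μ : Measure Ω}
    [IsProbabilityMeasure μ] {X : Ω → ℝ} {m v t : ℝ}
    (hXi : Integrable X μ) (hm : (∫ ω, X ω ∂μ) = m)
    (h2i : Integrable (fun ω => (X ω - m) ^ 2) μ)
    (h2 : (∫ ω, (X ω - m) ^ 2 ∂μ) ≤ v ^ 2) :
    (∫ ω, max (X ω - t) 0 ∂μ) ≤ (1 / 2) * (m - t + Real.sqrt (v ^ 2 + (m - t) ^ 2)) := by
  set s : ℝ := m - t with hs
  set R : ℝ := Real.sqrt (v ^ 2 + s ^ 2) with hRdef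
  have hR0 : 0 ≤ R := Real.sqrt_nonneg _
  have hR2 : R ^ 2 = v ^ 2 + s ^ 2 := Real.sq_sqrt (by positivity)
  have hfi : Integrable (fun ω => X ω - t) μ := hXi.sub (integrable_const t)
  have hf : (∫ ω, X ω - t ∂μ) = s := by
    rw [integral_sub hXi (integrable_const t)]
    simp [hm, hs]
  have hXm : (∫ ω, X ω - m ∂μ) = 0 := by
    rw [integral_sub hXi (integrable_const m)]
    simp [hm]
  have hXmi : Integrable (fun ω => X ω - m) μ := hXi.sub (integrable_const m)
  -- integrability and value of ∫ (X - t)^2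
  have hid : (fun ω => (X ω - t) ^ 2)
      = fun ω => (X ω - m) ^ 2 + (2 * (m - t)) * (X ω - m) + (m - t) ^ 2 := by
    funext ω; ring
  have hf2i : Integrable (fun ω => (X ω - t) ^ 2) μ := by
    rw [hid]
    exact (h2i.add (hXmi.const_mul _)).add (integrable_const _)
  have hcm : Integrable (fun ω => 2 * (m - t) * (X ω - m)) μ := hXmi.const_mul _
  have hsum1 : Integrable (fun ω => (X ω - m) ^ 2 + 2 * (m - t) * (X ω - m)) μ :=
    h2i.add hcm
  have hf2 : (∫ ω, (X ω - t) ^ 2 ∂μ) ≤ R ^ 2 := by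
    rw [hid]
    rw [integral_add hsum1 (integrable_const _), integral_add h2i hcm,
      integral_const_mul, hXm, integral_const]
    simp only [mul_zero, add_zero, measureReal_def, measure_univ, ENNReal.toReal_one, one_smul]
    rw [hR2]
    have hss : s ^ 2 = (m - t) ^ 2 := by rw [hs]
    linarith [h2, hss]
  -- Cauchy–Schwarz: (∫ |X - t|)² ≤ ∫ (X - t)²
  have habsi : Integrable (fun ω => |X ω - t|) μ := hfi.abs
  set I : ℝ := ∫ ω, |X ω - t| ∂μ with hI
  have hI0 : 0 ≤ I := integral_nonneg fun ω => abs_nonneg _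
  have hgid : (fun ω => (|X ω - t| - I) ^ 2)
      = fun ω => (X ω - t) ^ 2 + (-(2 * I)) * |X ω - t| + I ^ 2 := by
    funext ω; rw [← sq_abs (X ω - t)]; ring
  have hcm2 : Integrable (fun ω => -(2 * I) * |X ω - t|) μ := habsi.const_mul _
  have hsum2 : Integrable (fun ω => (X ω - t) ^ 2 + -(2 * I) * |X ω - t|) μ :=
    hf2i.add hcm2
  have hgint : (∫ ω, (|X ω - t| - I) ^ 2 ∂μ) = (∫ ω, (X ω - t) ^ 2 ∂μ) - I ^ 2 := by
    rw [hgid, integral_add hsum2 (integrable_const _),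
      integral_add hf2i hcm2, integral_const_mul, integral_const]
    simp only [measureReal_def, measure_univ, ENNReal.toReal_one, one_smul, ← hI]
    ring
  have hg0 : 0 ≤ (∫ ω, (|X ω - t| - I) ^ 2 ∂μ) := integral_nonneg fun ω => sq_nonneg _
  have hI2 : I ^ 2 ≤ R ^ 2 := by
    rw [hgint] at hg0
    linarith [hf2]
  have hIR : I ≤ R := by nlinarith
  -- conclude
  have hmax : (fun ω => max (X ω - t) 0) = fun ω => ((X ω - t) + |X ω - t|) / 2 := by
    funext ω
    rcases le_total (X ω - t) 0 with h | h
    · rw [max_eq_right h, abs_of_nonpos h]; ring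
    · rw [max_eq_left h, abs_of_nonneg h]; ring
  rw [hmax]
  have : (fun ω => ((X ω - t) + |X ω - t|) / 2)
      = fun ω => (1/2) * ((X ω - t) + |X ω - t|) := by funext ω; ring
  rw [this, integral_const_mul, integral_add hfi habsi, hf, ← hI]
  have : s + I ≤ s + R := by linarith
  nlinarith

lemma V_mem {Ω : Type*} [MeasurableSpace Ω] {μ : Measure Ω} [IsProbabilityMeasure μ]
    (hμ : Atomless μ) (m v t : ℝ) (hv : 0 ≤ v) :
    (1 / 2) * (m - t + Real.sqrt (v ^ 2 + (m - t) ^ 2)) ∈ meanExcessVarianceSet μ m v t := by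
  set s : ℝ := m - t with hs
  set R : ℝ := Real.sqrt (v ^ 2 + s ^ 2) with hRdef
  have hR0 : 0 ≤ R := Real.sqrt_nonneg _
  have hR2 : R ^ 2 = v ^ 2 + s ^ 2 := Real.sq_sqrt (by positivity)
  rcases eq_or_lt_of_le hv with hv0 | hvpos
  · -- v = 0 : take X constant m
    refine ⟨fun _ => m, measurable_const, integrable_const m, by simp, ?_, ?_, ?_⟩
    · simpa using integrable_const (0 : ℝ)
    · simp; positivity
    · have hRabs : R = |s| := by
        rw [hRdef, ← hv0]
        simp [Real.sqrt_sq_eq_abs]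
      rw [integral_const]
      simp only [measureReal_def, measure_univ, ENNReal.toReal_one, one_smul, smul_eq_mul]
      rw [hRabs]
      rcases le_total s 0 with h | h
      · rw [max_eq_right h, abs_of_nonpos h]; ring
      · rw [max_eq_left h, abs_of_nonneg h]; ring
  · -- v > 0 : two-point distribution
    have hv2 : 0 < v ^ 2 := by positivity
    have hRpos : 0 < R := by nlinarith
    have hsR : |s| < R := by
      have h1 : s ^ 2 < R ^ 2 := by nlinarith
      have := abs_nonneg s
      nlinarith [sq_abs s]
    have hsltR : s < R := lt_of_le_of_lt (le_abs_self s) hsR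
    have hsgt : -R < s := by
      have := neg_abs_le s
      linarith [hsR]
    set α : ℝ := (R + s) / (2 * R) with hα
    have hα0 : 0 < α := div_pos (by linarith) (by positivity)
    have hα1 : α < 1 := by
      rw [hα, div_lt_one (by positivity)]
      linarith
    obtain ⟨A, hAm, hAμ⟩ := sierpinski (μ := μ) hμ
      (β := ENNReal.ofReal α) (by simpa using ENNReal.ofReal_le_one.mpr hα1.le)
    have hAtoReal : (μ A).toReal = α := by rw [hAμ, ENNReal.toReal_ofReal hα0.le]
    set X : Ω → ℝ := fun ω => A.indicator (fun _ => 2 * R) ω + (t - R) with hX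
    have hXmeas : Measurable X := (measurable_const.indicator hAm).add measurable_const
    have hIi : Integrable (A.indicator fun _ => (2 * R : ℝ)) μ :=
      (integrable_const (2 * R)).indicator hAm
    have hXi : Integrable X μ := hIi.add (integrable_const _)
    have hXint : (∫ ω, X ω ∂μ) = m := by
      rw [hX]
      rw [integral_add hIi (integrable_const _), integral_indicator_const _ hAm,
        integral_const]
      simp only [measureReal_def, measure_univ, ENNReal.toReal_one, one_smul, smul_eq_mul, hAtoReal]
      rw [hα]
      field_simp
      rw [hs]; ring
    have hsq : (fun ω => (X ω - m) ^ 2)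
        = fun ω => A.indicator (fun _ => (R - s) ^ 2 - (R + s) ^ 2) ω + (R + s) ^ 2 := by
      funext ω
      by_cases hω : ω ∈ A
      · simp only [hX, indicator_of_mem hω]
        rw [hs]; ring
      · simp only [hX, indicator_of_notMem hω]
        rw [hs]; ring
    have hIi2 : Integrable (A.indicator fun _ => ((R - s) ^ 2 - (R + s) ^ 2 : ℝ)) μ :=
      (integrable_const _).indicator hAm
    have hsqi : Integrable (fun ω => (X ω - m) ^ 2) μ := by
      rw [hsq]; exact hIi2.add (integrable_const _)
    have hsqint : (∫ ω, (X ω - m) ^ 2 ∂μ) ≤ v ^ 2 := by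
      rw [hsq, integral_add hIi2 (integrable_const _), integral_indicator_const _ hAm,
        integral_const]
      simp only [measureReal_def, measure_univ, ENNReal.toReal_one, one_smul, smul_eq_mul, hAtoReal]
      rw [hα]
      have : (R + s) / (2 * R) * ((R - s) ^ 2 - (R + s) ^ 2) + (R + s) ^ 2 = v ^ 2 := by
        field_simp
        linear_combination 2 * R * hR2
      linarith [this]
    have hmax : (fun ω => max (X ω - t) 0) = A.indicator fun _ => R := by
      funext ω
      by_cases hω : ω ∈ A
      · simp only [hX, indicator_of_mem hω]
        rw [max_eq_left (by linarith)]
        ring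
      · simp only [hX, indicator_of_notMem hω]
        rw [max_eq_right (by linarith)]
    refine ⟨X, hXmeas, hXi, hXint, hsqi, hsqint, ?_⟩
    rw [hmax, integral_indicator_const _ hAm]
    simp only [smul_eq_mul, measureReal_def, hAtoReal, hα]
    field_simp
    ring

end Aux

lemma alpha_isGreatest (m v t : ℝ) (hv : 0 ≤ v) :
    IsGreatest {y : ℝ | ∃ α ∈ Set.Icc (0 : ℝ) 1,
        y = (1 - α) * (m - t) + v * Real.sqrt (α * (1 - α))}
      ((1 / 2) * (m - t + Real.sqrt (v ^ 2 + (m - t) ^ 2))) := by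
  have hR0 : 0 ≤ Real.sqrt (v ^ 2 + (m - t) ^ 2) := Real.sqrt_nonneg _
  have hR2 : (Real.sqrt (v ^ 2 + (m - t) ^ 2)) ^ 2 = v ^ 2 + (m - t) ^ 2 :=
    Real.sq_sqrt (by positivity)
  set s : ℝ := m - t
  set R : ℝ := Real.sqrt (v ^ 2 + s ^ 2)
  clear_value s R
  constructor
  · -- membership
    rcases eq_or_lt_of_le hR0 with hR | hRpos
    · -- R = 0 : then v = 0, s = 0
      have hv0 : v = 0 := by nlinarith
      have hs0 : s = 0 := by nlinarith
      exact ⟨0, ⟨le_rfl, zero_le_one⟩, by simp [hv0, hs0, ← hR]⟩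
    · have hsabs : |s| ≤ R := by nlinarith [sq_abs s, abs_nonneg s]
      have h1 : -R ≤ s := by have := neg_abs_le s; linarith
      have h2 : s ≤ R := le_trans (le_abs_self s) hsabs
      refine ⟨(R - s) / (2 * R), ⟨div_nonneg (by linarith) (by positivity), ?_⟩, ?_⟩
      · rw [div_le_one (by positivity)]; linarith
      · have hprod : (R - s) / (2 * R) * (1 - (R - s) / (2 * R)) = (v / (2 * R)) ^ 2 := by
          field_simp
          linear_combination hR2
        rw [hprod, Real.sqrt_sq (by positivity)]
        field_simp
        linear_combination hR2
  · -- upper bound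
    rintro y ⟨α, ⟨hα0, hα1⟩, rfl⟩
    set w : ℝ := Real.sqrt (α * (1 - α)) with hwdef
    have hw0 : 0 ≤ w := Real.sqrt_nonneg _
    have hw2 : w ^ 2 = α * (1 - α) := Real.sq_sqrt (by nlinarith)
    clear_value w
    nlinarith [sq_nonneg (v * (1 - 2 * α) - 2 * w * s),
      sq_nonneg (R + ((1 - 2 * α) * s + 2 * v * w)),
      sq_nonneg (R - ((1 - 2 * α) * s + 2 * v * w)),
      mul_nonneg hw0 hv, mul_nonneg hα0 (by linarith : (0:ℝ) ≤ 1 - α)]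

/-- **Worst-case mean excess value under mean–variance uncertainty.** The supremum of
`E[(X - t)_+]` over `L²(m, v)` equals `(1/2)(m - t + √(v² + (m - t)²))`, and also equals
the maximum over `α ∈ [0,1]` of `(1-α)(m-t) + v √(α(1-α))`. -/
theorem worst_case_mean_excess_variance {Ω : Type*} [MeasurableSpace Ω] (μ : Measure Ω)
    [IsProbabilityMeasure μ] (hμ : Atomless μ) (m v t : ℝ) (hv : 0 ≤ v) :
    sSup (meanExcessVarianceSet μ m v t)
        = (1 / 2) * (m - t + Real.sqrt (v ^ 2 + (m - t) ^ 2)) ∧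
      IsGreatest {y : ℝ | ∃ α ∈ Set.Icc (0 : ℝ) 1,
          y = (1 - α) * (m - t) + v * Real.sqrt (α * (1 - α))}
        (sSup (meanExcessVarianceSet μ m v t)) := by
  have hVmem := V_mem (μ := μ) hμ m v t hv
  have hub : ∀ y ∈ meanExcessVarianceSet μ m v t,
      y ≤ (1 / 2) * (m - t + Real.sqrt (v ^ 2 + (m - t) ^ 2)) := by
    rintro y ⟨X, hXm, hXi, hm, h2i, h2, rfl⟩
    exact mean_excess_le hXi hm h2i h2
  have h1 : sSup (meanExcessVarianceSet μ m v t)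
      = (1 / 2) * (m - t + Real.sqrt (v ^ 2 + (m - t) ^ 2)) :=
    IsGreatest.csSup_eq ⟨hVmem, hub⟩
  refine ⟨h1, ?_⟩
  rw [h1]
  exact alpha_isGreatest m v t hv
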